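/- Let A be an n×n strictly accretive matrix whose numerical range lies in the sector S_α for some α ∈ [0, π/2). Then Re(A⁻¹) ≤ (Re(A))⁻¹ ≤ sec²(α)·Re(A⁻¹) in the Loewner order. -/

import Mathlib

open MeasureTheory Matrix
open scoped ComplexOrder

/-- The "real part" (Hermitian part) of a complex matrix: `(A + Aᴴ)/2`. -/
noncomputable def mre {m : Type*} (A : Matrix m m ℂ) : Matrix m m ℂ :=
  (1/2 : ℂ) • (A + Aᴴ)

/-- A matrix is accretive if its Hermitian part is positive semidefinite. -/
def Accretive {m : Type*} [Fintype m] (A : Matrix m m ℂ) : Prop :=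
  (mre A).PosSemidef

/-- Principal fractional power `A ^ t` of a matrix whose spectrum avoids `(-∞, 0]`,
given (for `0 < t < 1`) by the standard integral formula
`A^t = (sin (tπ)/π) ∫₀^∞ s^(t-1) A (A + s I)⁻¹ ds`. -/
noncomputable def apow {m : Type*} [Fintype m] [DecidableEq m]
    (A : Matrix m m ℂ) (t : ℝ) : Matrix m m ℂ :=
  if t = 0 then 1 else if t = 1 then A else
    Matrix.of fun i j => ∫ s in Set.Ioi (0 : ℝ),
      (((Real.sin (t * Real.pi) / Real.pi) * s ^ (t - 1)) •
        (A * (A + (s : ℂ) • (1 : Matrix m m ℂ))⁻¹)) i j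

/-- The weighted geometric mean `A ♯ₜ B = A^(1/2) (A^(-1/2) B A^(-1/2))^t A^(1/2)`
of (strictly accretive) matrices. -/
noncomputable def gmean {m : Type*} [Fintype m] [DecidableEq m]
    (A : Matrix m m ℂ) (t : ℝ) (B : Matrix m m ℂ) : Matrix m m ℂ :=
  apow A (1/2) * apow ((apow A (1/2))⁻¹ * B * (apow A (1/2))⁻¹) t * apow A (1/2)

/-- The absolute value `|X| = (Xᴴ X)^(1/2)` of a matrix. -/
noncomputable def absM {m : Type*} [Fintype m] [DecidableEq m]
    (X : Matrix m m ℂ) : Matrix m m ℂ :=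
  (Matrix.posSemidef_conjTranspose_mul_self X).1.eigenvectorUnitary.1 *
    diagonal ((↑) ∘ Real.sqrt ∘ (Matrix.posSemidef_conjTranspose_mul_self X).1.eigenvalues) *
    (star (Matrix.posSemidef_conjTranspose_mul_self X).1.eigenvectorUnitary : Matrix m m ℂ)

/-- The `j`-th largest singular value of a complex matrix. -/
noncomputable def singVals {k : ℕ} (T : Matrix (Fin k) (Fin k) ℂ) (j : Fin k) : ℝ :=
  Real.sqrt (((Matrix.posSemidef_conjTranspose_mul_self T).1.eigenvalues ∘
    Tuple.sort (Matrix.posSemidef_conjTranspose_mul_self T).1.eigenvalues) j.rev)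

/-- The `j`-th largest eigenvalue of a Hermitian matrix (junk value `0` otherwise). -/
noncomputable def eigDesc {k : ℕ} (T : Matrix (Fin k) (Fin k) ℂ) (j : Fin k) : ℝ :=
  if h : T.IsHermitian then (h.eigenvalues ∘ Tuple.sort h.eigenvalues) j.rev else 0

/-- The numerical range of `A` lies in the sector
`S_α = {z : Re z ≥ 0, |Im z| ≤ tan α · Re z}`. -/
def InSector {k : ℕ} (α : ℝ) (A : Matrix (Fin k) (Fin k) ℂ) : Prop :=
  ∀ x : EuclideanSpace ℂ (Fin k), ‖x‖ = 1 →
    0 ≤ (star (x : Fin k → ℂ) ⬝ᵥ A.mulVec (x : Fin k → ℂ)).re ∧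
      |(star (x : Fin k → ℂ) ⬝ᵥ A.mulVec (x : Fin k → ℂ)).im| ≤
        Real.tan α * (star (x : Fin k → ℂ) ⬝ᵥ A.mulVec (x : Fin k → ℂ)).re

variable {n : ℕ}

lemma starDot (M : Matrix (Fin n) (Fin n) ℂ) (x y : Fin n → ℂ) :
    star (star x ⬝ᵥ M *ᵥ y) = star y ⬝ᵥ Mᴴ *ᵥ x := by
  have h : star y ⬝ᵥ Mᴴ *ᵥ x = star (star (Mᴴ *ᵥ x) ⬝ᵥ y) := Matrix.star_dotProduct _ _
  rw [h, Matrix.star_mulVec, Matrix.conjTranspose_conjTranspose, Matrix.dotProduct_mulVec]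

lemma mulCancelLeft {X Y : Matrix (Fin n) (Fin n) ℂ} (h : X * Y = 1)
    (Z : Matrix (Fin n) (Fin n) ℂ) : X * (Y * Z) = Z := by
  rw [← Matrix.mul_assoc, h, Matrix.one_mul]

lemma hermDotIm {M : Matrix (Fin n) (Fin n) ℂ} (hM : M.IsHermitian) (x : Fin n → ℂ) :
    (star x ⬝ᵥ M *ᵥ x).im = 0 := by
  have h := starDot M x x
  rw [hM.eq] at h
  exact Complex.conj_eq_iff_im.mp h

lemma zeroOfDot {K : Matrix (Fin n) (Fin n) ℂ}
    (h : ∀ x : Fin n → ℂ, star x ⬝ᵥ K *ᵥ x = 0) : K = 0 := by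
  have h2 : Matrix.toEuclideanLin K = 0 := by
    rw [← inner_map_self_eq_zero]
    intro x
    have e : (inner ℂ (Matrix.toEuclideanLin K x) x : ℂ) =
        star (star (WithLp.ofLp x) ⬝ᵥ K *ᵥ WithLp.ofLp x) := by
      rw [starDot, EuclideanSpace.inner_eq_star_dotProduct, Matrix.ofLp_toEuclideanLin_apply,
        Matrix.star_mulVec, dotProduct_comm (WithLp.ofLp x), ← Matrix.dotProduct_mulVec]
    rw [e, h, star_zero]
  simpa using (LinearEquiv.map_eq_zero_iff Matrix.toEuclideanLin).mp h2

lemma quadKey {H K : Matrix (Fin n) (Fin n) ℂ} (hH : H.PosDef) (hK : K.IsHermitian)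
    {t : ℝ} (ht : 0 ≤ t)
    (hb : ∀ x : Fin n → ℂ, ‖star x ⬝ᵥ K *ᵥ x‖ ≤ t * (star x ⬝ᵥ H *ᵥ x).re) :
    ((((t ^ 2 : ℝ)) : ℂ) • H - K * H⁻¹ * K).PosSemidef := by
  have hdetH : IsUnit H.det := (Matrix.isUnit_iff_isUnit_det H).mp hH.isUnit
  have hHi : H⁻¹.IsHermitian := hH.1.inv
  have hKHK : (K * H⁻¹ * K).IsHermitian := by
    unfold Matrix.IsHermitian
    simp [Matrix.conjTranspose_mul, hK.eq, hHi.eq, Matrix.mul_assoc]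
  rcases eq_or_lt_of_le ht with h0 | htpos
  · have hK0 : K = 0 := by
      apply zeroOfDot
      intro x
      have h1 := hb x
      rw [← h0, zero_mul] at h1
      have := norm_nonneg (star x ⬝ᵥ K *ᵥ x)
      have : ‖star x ⬝ᵥ K *ᵥ x‖ = 0 := le_antisymm h1 this
      simpa using this
    rw [hK0, ← h0]
    simp only [Matrix.zero_mul, Matrix.mul_zero, sub_zero]
    norm_num
    exact Matrix.PosSemidef.zero
  · refine Matrix.posSemidef_iff_dotProduct_mulVec.mpr ⟨?_, ?_⟩
    · apply Matrix.IsHermitian.sub _ hKHK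
      unfold Matrix.IsHermitian
      rw [Matrix.conjTranspose_smul, hH.1.eq]
      congr 1
      simp [Complex.star_def, Complex.conj_ofReal]
    · intro x
      have hcan : ∀ z : Fin n → ℂ, H *ᵥ (H⁻¹ *ᵥ z) = z := fun z => by
        rw [Matrix.mulVec_mulVec, Matrix.mul_nonsing_inv _ hdetH, Matrix.one_mulVec]
      set y := H⁻¹ *ᵥ (K *ᵥ x) with hy
      set a := star x ⬝ᵥ H *ᵥ x with ha
      set k := star x ⬝ᵥ K *ᵥ x with hk
      set p := star x ⬝ᵥ (K * H⁻¹ * K) *ᵥ x with hp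
      set q := star y ⬝ᵥ K *ᵥ y with hq
      have f1 : H *ᵥ y = K *ᵥ x := hcan _
      have f2 : star x ⬝ᵥ H *ᵥ y = k := by rw [f1, hk]
      have kreal : star k = k := by rw [hk, starDot, hK.eq]
      have f3 : star y ⬝ᵥ H *ᵥ x = k := by
        have h := starDot H x y
        rw [hH.1.eq, f2] at h
        rw [← h, kreal]
      have f4 : star x ⬝ᵥ K *ᵥ y = p := by
        rw [hp, ← Matrix.mulVec_mulVec, ← Matrix.mulVec_mulVec]
      have preal : star p = p := by rw [hp, starDot, hKHK.eq]
      have f5 : star y ⬝ᵥ K *ᵥ x = p := by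
        have h := starDot K x y
        rw [hK.eq, f4] at h
        rw [← h, preal]
      have f6 : star y ⬝ᵥ H *ᵥ y = p := by rw [f1, f5]
      have qreal : star q = q := by rw [hq, starDot, hK.eq]
      -- imaginary parts vanish
      have haim : a.im = 0 := hermDotIm hH.1 x
      have hpim : p.im = 0 := hermDotIm hKHK x
      -- positivity of the forms t H ± K
      have hplus : ∀ w : Fin n → ℂ,
          0 ≤ (t : ℂ) * (star w ⬝ᵥ H *ᵥ w) + star w ⬝ᵥ K *ᵥ w := by
        intro w
        rw [Complex.nonneg_iff]
        constructor
        · have h1 := hb w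
          have h2 := abs_le.mp (le_trans (Complex.abs_re_le_norm _) h1)
          simp only [Complex.add_re, Complex.mul_re, Complex.ofReal_re, Complex.ofReal_im,
            zero_mul, sub_zero]
          linarith [h2.1]
        · simp [Complex.add_im, Complex.mul_im, hermDotIm hH.1 w, hermDotIm hK w]
      have hminus : ∀ w : Fin n → ℂ,
          0 ≤ (t : ℂ) * (star w ⬝ᵥ H *ᵥ w) - star w ⬝ᵥ K *ᵥ w := by
        intro w
        rw [Complex.nonneg_iff]
        constructor
        · have h1 := hb w
          have h2 := abs_le.mp (le_trans (Complex.abs_re_le_norm _) h1)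
          simp only [Complex.sub_re, Complex.mul_re, Complex.ofReal_re, Complex.ofReal_im,
            zero_mul, sub_zero]
          linarith [h2.2]
        · simp [Complex.sub_im, Complex.mul_im, hermDotIm hH.1 w, hermDotIm hK w]
      have e1 := hplus ((t : ℂ) • x - y)
      have e2 := hminus ((t : ℂ) • x + y)
      have expand : ((t : ℂ) * (star ((t : ℂ) • x - y) ⬝ᵥ H *ᵥ ((t : ℂ) • x - y))
            + star ((t : ℂ) • x - y) ⬝ᵥ K *ᵥ ((t : ℂ) • x - y))
          + ((t : ℂ) * (star ((t : ℂ) • x + y) ⬝ᵥ H *ᵥ ((t : ℂ) • x + y))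
            - star ((t : ℂ) • x + y) ⬝ᵥ K *ᵥ ((t : ℂ) • x + y))
          = 2 * (t : ℂ) ^ 3 * a - 2 * (t : ℂ) * p := by
        simp only [star_sub, star_add, star_smul, Complex.star_def, Complex.conj_ofReal,
          Matrix.mulVec_sub, Matrix.mulVec_add, Matrix.mulVec_smul,
          sub_dotProduct, add_dotProduct, smul_dotProduct,
          dotProduct_sub, dotProduct_add, dotProduct_smul,
          smul_eq_mul, f2, f3, f4, f5, f6, ← ha, ← hk, ← hp, ← hq]
        ring
      have e3 : 0 ≤ 2 * (t : ℂ) ^ 3 * a - 2 * (t : ℂ) * p := by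
        rw [← expand]; exact add_nonneg e1 e2
      have e3re : 0 ≤ 2 * t ^ 3 * a.re - 2 * t * p.re := by
        have := (Complex.nonneg_iff.mp e3).1
        simpa [Complex.sub_re, Complex.mul_re, Complex.mul_im, ← Complex.ofReal_pow,
          Complex.ofReal_re, Complex.ofReal_im, haim, hpim] using this
      have goal_eq : star x ⬝ᵥ (((t ^ 2 : ℝ) : ℂ) • H - K * H⁻¹ * K) *ᵥ x
          = ((t ^ 2 : ℝ) : ℂ) * a - p := by
        rw [Matrix.sub_mulVec, dotProduct_sub, Matrix.smul_mulVec,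
          dotProduct_smul, smul_eq_mul, ← ha, ← hp]
      rw [goal_eq, Complex.nonneg_iff]
      constructor
      · simp only [Complex.sub_re, Complex.mul_re, Complex.ofReal_re, Complex.ofReal_im,
          zero_mul, sub_zero]
        nlinarith [e3re, htpos]
      · simp [Complex.sub_im, Complex.mul_im, ← Complex.ofReal_pow, haim, hpim]


/-- If `A` is strictly accretive with numerical range in `S_α`, then
`Re (A⁻¹) ≤ (Re A)⁻¹ ≤ sec² α · Re (A⁻¹)` in the Loewner order. -/
theorem stmt4 {n : ℕ} (α : ℝ) (hα₀ : 0 ≤ α) (hα₁ : α < Real.pi / 2)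
    (A : Matrix (Fin n) (Fin n) ℂ) (hA : (mre A).PosDef) (hAsec : InSector α A) :
    ((mre A)⁻¹ - mre A⁻¹).PosSemidef ∧
      ((((Real.cos α)⁻¹ ^ 2 : ℝ) : ℂ) • mre A⁻¹ - (mre A)⁻¹).PosSemidef := by
  have hcos : 0 < Real.cos α := Real.cos_pos_of_mem_Ioo ⟨by linarith [Real.pi_pos], hα₁⟩
  have ht : 0 ≤ Real.tan α := Real.tan_nonneg_of_nonneg_of_le_pi_div_two hα₀ hα₁.le
  set H := mre A with hHdef
  clear_value H
  have hHherm : H.IsHermitian := hA.1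
  have hdetH : IsUnit H.det := (Matrix.isUnit_iff_isUnit_det H).mp hA.isUnit
  have h2H : A + Aᴴ = (2:ℂ) • H := by
    rw [hHdef]; unfold mre; rw [smul_smul]; norm_num
  have hAH : Aᴴ = (2:ℂ) • H - A := by rw [← h2H]; abel
  set K : Matrix (Fin n) (Fin n) ℂ := (-Complex.I) • (A - H) with hKdef
  clear_value K
  have hKherm : K.IsHermitian := by
    unfold Matrix.IsHermitian
    rw [hKdef, Matrix.conjTranspose_smul, Matrix.conjTranspose_sub, hHherm.eq, hAH]
    have hs : (star (-Complex.I)) = Complex.I := by simp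
    rw [hs]
    module
  -- invertibility of A
  have hdetA : IsUnit A.det := by
    rw [isUnit_iff_ne_zero]
    intro hd0
    obtain ⟨v, hv0, hv⟩ := Matrix.exists_mulVec_eq_zero_iff.mpr hd0
    have h1 : star v ⬝ᵥ H *ᵥ v = 0 := by
      rw [hHdef]; unfold mre
      rw [Matrix.smul_mulVec, dotProduct_smul, Matrix.add_mulVec,
        dotProduct_add, hv, ← starDot, hv]
      simp
    have h2 := (Matrix.posDef_iff_dotProduct_mulVec.mp hA).2 hv0
    rw [h1] at h2
    exact lt_irrefl _ h2
  have hdetAH : IsUnit Aᴴ.det := by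
    rw [Matrix.det_conjTranspose]; exact hdetA.star
  have cA : A * A⁻¹ = 1 := Matrix.mul_nonsing_inv _ hdetA
  have cA' : A⁻¹ * A = 1 := Matrix.nonsing_inv_mul _ hdetA
  have cH : H * H⁻¹ = 1 := Matrix.mul_nonsing_inv _ hdetH
  have cH' : H⁻¹ * H = 1 := Matrix.nonsing_inv_mul _ hdetH
  have cAH : Aᴴ * (Aᴴ)⁻¹ = 1 := Matrix.mul_nonsing_inv _ hdetAH
  have cAH' : (Aᴴ)⁻¹ * Aᴴ = 1 := Matrix.nonsing_inv_mul _ hdetAH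
  have hconjinv : (A⁻¹)ᴴ = (Aᴴ)⁻¹ := A.conjTranspose_nonsing_inv
  have hmreInv : mre A⁻¹ = A⁻¹ * H * (Aᴴ)⁻¹ := by
    unfold mre
    rw [hconjinv, hHdef]; unfold mre
    simp only [Matrix.mul_add, Matrix.add_mul, mul_smul_comm, smul_mul_assoc,
      Matrix.mul_assoc, mulCancelLeft cA', mulCancelLeft cA, mulCancelLeft cAH,
      mulCancelLeft cAH', cA, cA', cAH, cAH', Matrix.mul_one, Matrix.one_mul]
    module
  have E : A * H⁻¹ * Aᴴ = H + (H - A) * H⁻¹ * (A - H) := by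
    rw [hAH]
    simp only [Matrix.mul_sub, Matrix.sub_mul, Matrix.mul_add, Matrix.add_mul,
      mul_smul_comm, smul_mul_assoc, Matrix.mul_assoc,
      mulCancelLeft cH, mulCancelLeft cH', cH, cH', Matrix.mul_one, Matrix.one_mul]
    module
  have hE' : (H - A) * H⁻¹ * (A - H) = A * H⁻¹ * Aᴴ - H := by rw [E]; abel
  have hKHK : K * H⁻¹ * K = (H - A) * H⁻¹ * (A - H) := by
    have h1 : (H - A) = -(A - H) := (neg_sub _ _).symm
    rw [hKdef, h1]
    simp only [smul_mul_assoc, mul_smul_comm, smul_smul, Matrix.neg_mul]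
    rw [show ((-Complex.I) * (-Complex.I)) = (-1:ℂ) by simp [Complex.I_mul_I]]
    module
  have key1 : H⁻¹ - mre A⁻¹ = A⁻¹ * ((H - A) * H⁻¹ * (A - H)) * (A⁻¹)ᴴ := by
    rw [hconjinv, hmreInv, hE']
    simp only [Matrix.mul_sub, Matrix.sub_mul, Matrix.mul_assoc,
      mulCancelLeft cA', mulCancelLeft cA, mulCancelLeft cAH, mulCancelLeft cAH',
      cA, cA', cAH, cAH', Matrix.mul_one, Matrix.one_mul]
  have hsubH : (A - H)ᴴ = H - A := by
    rw [Matrix.conjTranspose_sub, hAH, hHherm.eq]; module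
  refine ⟨?_, ?_⟩
  · have hP : ((A - H)ᴴ * H⁻¹ * (A - H)).PosSemidef :=
      (hA.inv.posSemidef).conjTranspose_mul_mul_same (A - H)
    rw [hsubH] at hP
    have final := hP.mul_mul_conjTranspose_same A⁻¹
    rw [key1]
    exact final
  · have hsec : ∀ x : Fin n → ℂ,
        ‖star x ⬝ᵥ K *ᵥ x‖ ≤ Real.tan α * (star x ⬝ᵥ H *ᵥ x).re := by
      intro x
      have hherm : star x ⬝ᵥ Aᴴ *ᵥ x = star (star x ⬝ᵥ A *ᵥ x) := (starDot A x x).symm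
      have hw : star x ⬝ᵥ H *ᵥ x = (((star x ⬝ᵥ A *ᵥ x).re : ℝ) : ℂ) := by
        rw [hHdef]; unfold mre
        rw [Matrix.smul_mulVec, dotProduct_smul, Matrix.add_mulVec,
          dotProduct_add, hherm, smul_eq_mul]
        rw [Complex.star_def, Complex.add_conj]
        push_cast; ring
      have hkx : star x ⬝ᵥ K *ᵥ x = (((star x ⬝ᵥ A *ᵥ x).im : ℝ) : ℂ) := by
        rw [hKdef, Matrix.smul_mulVec, dotProduct_smul, Matrix.sub_mulVec,
          dotProduct_sub, hw, smul_eq_mul]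
        apply Complex.ext <;> simp [Complex.mul_re, Complex.mul_im]
      have hbnd : |(star x ⬝ᵥ A *ᵥ x).im| ≤ Real.tan α * (star x ⬝ᵥ A *ᵥ x).re := by
        by_cases hx : x = 0
        · simp [hx]
        · have hx' : (WithLp.equiv 2 (Fin n → ℂ)).symm x ≠ 0 := by simpa using hx
          have hnu : ‖(‖(WithLp.equiv 2 (Fin n → ℂ)).symm x‖⁻¹ : ℂ) •
              (WithLp.equiv 2 (Fin n → ℂ)).symm x‖ = 1 := norm_smul_inv_norm hx'
          obtain ⟨h1, h2⟩ := hAsec _ hnu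
          set c : ℝ := ‖(WithLp.equiv 2 (Fin n → ℂ)).symm x‖ with hc
          have hcpos : 0 < c := norm_pos_iff.mpr hx'
          have hform : star (((c : ℂ))⁻¹ • x) ⬝ᵥ A *ᵥ (((c : ℂ))⁻¹ • x)
              = (((c⁻¹ ^ 2 : ℝ)) : ℂ) * (star x ⬝ᵥ A *ᵥ x) := by
            rw [star_smul, Matrix.mulVec_smul, smul_dotProduct, dotProduct_smul,
              smul_eq_mul, smul_eq_mul]
            rw [show star ((c : ℂ))⁻¹ = ((c : ℂ))⁻¹ by
              rw [star_inv₀, Complex.star_def, Complex.conj_ofReal]]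
            push_cast; ring
          have h2' : |(star (((c : ℂ))⁻¹ • x) ⬝ᵥ A *ᵥ (((c : ℂ))⁻¹ • x)).im|
              ≤ Real.tan α *
                (star (((c : ℂ))⁻¹ • x) ⬝ᵥ A *ᵥ (((c : ℂ))⁻¹ • x)).re := h2
          rw [hform] at h2'
          have hr : (0:ℝ) < c⁻¹ ^ 2 := by positivity
          simp only [Complex.mul_im, Complex.mul_re, Complex.ofReal_re, Complex.ofReal_im,
            zero_mul, sub_zero, add_zero, zero_add] at h2'
          rw [abs_mul, abs_of_pos hr] at h2'
          exact (mul_le_mul_iff_right₀ hr).mp (by linarith)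
      rw [hkx, hw]
      simpa [Complex.norm_real, Real.norm_eq_abs, Complex.ofReal_re] using hbnd
    have hcoef : (((Real.cos α)⁻¹ ^ 2 : ℝ) : ℂ) = ((1 + Real.tan α ^ 2 : ℝ) : ℂ) := by
      norm_cast
      rw [inv_pow, ← Real.inv_one_add_tan_sq hcos.ne', inv_inv]
    have key2 : ((1 + Real.tan α ^ 2 : ℝ) : ℂ) • mre A⁻¹ - H⁻¹
        = A⁻¹ * (((Real.tan α ^ 2 : ℝ) : ℂ) • H - K * H⁻¹ * K) * (A⁻¹)ᴴ := by
      rw [hconjinv, hmreInv, hKHK, hE']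
      push_cast
      simp only [Matrix.mul_sub, Matrix.sub_mul, smul_sub, mul_smul_comm, smul_mul_assoc,
        Matrix.mul_assoc, mulCancelLeft cA', mulCancelLeft cA, mulCancelLeft cAH,
        mulCancelLeft cAH', cA, cA', cAH, cAH', Matrix.mul_one, Matrix.one_mul]
      module
    rw [hcoef, key2]
    exact (quadKey hA hKherm ht hsec).mul_mul_conjTranspose_same A⁻¹
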